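/- For all n ≥ 1 and k ≥ 1, the greedy min-flip sequence does not get stuck before producing all k^n·n! coloured permutations, and the sequence of flip lengths it uses is exactly σ^k_n: for every 1 ≤ i ≤ k^n·n! − 1, the step from G_{i−1} to G_i uses a flip of length equal to the i-th entry of σ^k_n. -/

import Mathlib

/-- Increment the colour of every symbol of a coloured pre-permutation by `s`, modulo `k`. -/
def colShift (k s : ℕ) (p : List (ℕ × ℕ)) : List (ℕ × ℕ) :=
  p.map (fun x => (x.1, (x.2 + s) % k))

/-- The colour-incrementing prefix-reversal of length `j` (a "flip"):
reverse the first `j` symbols and increment their colours by 1 modulo `k`. -/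
def cflip (k j : ℕ) (p : List (ℕ × ℕ)) : List (ℕ × ℕ) :=
  colShift k 1 (p.take j).reverse ++ p.drop j

/-- `p` is a `k`-coloured permutation of order `n`: its values are a permutation
of `{1,…,n}` and all its colours lie in `{0,…,k-1}`. -/
def IsCPerm (n k : ℕ) (p : List (ℕ × ℕ)) : Prop :=
  (p.map Prod.fst).Perm ((List.range n).map (· + 1)) ∧ ∀ x ∈ p, x.2 < k

/-- `p` is a pre-perm: distinct values from `{1,…,n}`, colours in `{0,…,k-1}`. -/
def IsPrePerm (n k : ℕ) (p : List (ℕ × ℕ)) : Prop :=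
  (p.map Prod.fst).Nodup ∧ ∀ x ∈ p, (1 ≤ x.1 ∧ x.1 ≤ n) ∧ x.2 < k

/-- The circular string `ρ(p) = p^{+(k-1)} · p^{+(k-2)} ⋯ p^{+0}`. -/
def rho (k : ℕ) (p : List (ℕ × ℕ)) : List (ℕ × ℕ) :=
  ((List.range k).reverse).flatMap (fun s => colShift k s p)

/-- `ρ(p)_i`: the length `j-1` contiguous subword of the circular string `ρ(p)`
ending with `r_{i-1}` (1-based indices modulo `m = k·j`, where `j = p.length`). -/
def rhoSub (k : ℕ) (p : List (ℕ × ℕ)) (i : ℕ) : List (ℕ × ℕ) :=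
  (List.range (p.length - 1)).map
    (fun t => (rho k p).getD ((i + t + k * p.length - p.length) % (k * p.length)) (0, 0))

/-- Fuel-indexed version of the recursive listing `Rec(p,k)`; `fuel = p.length`. -/
def RecAux (k : ℕ) : ℕ → List (ℕ × ℕ) → List (List (ℕ × ℕ))
  | 0, p => (List.range k).map (fun s => colShift k s p)
  | fuel + 1, p =>
    if p.length ≤ 1 then (List.range k).map (fun s => colShift k s p)
    else ((List.range (k * p.length)).reverse).flatMap
      (fun i => (RecAux k fuel (rhoSub k p (i + 1))).map (fun q => q ++ [(rho k p).getD i (0, 0)]))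

/-- The recursive listing `Rec(p,k)`:
`Rec(p₁,k) = p₁, p₁^{+1}, …, p₁^{+(k-1)}` when `p` has length 1, and
`Rec(p,k) = Rec(ρ(p)_m,k)·r_m, Rec(ρ(p)_{m-1},k)·r_{m-1}, …, Rec(ρ(p)_1,k)·r_1` otherwise. -/
def RecList (k : ℕ) (p : List (ℕ × ℕ)) : List (List (ℕ × ℕ)) :=
  RecAux k p.length p

/-- The identity coloured permutation `1⁰2⁰⋯n⁰`. -/
def idPerm (n : ℕ) : List (ℕ × ℕ) := (List.range n).map (fun i => (i + 1, 0))
/-- The flip sequence `σ^k_n`: `σ^k_1` consists of `k-1` ones and, for `n > 1`,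
`σ^k_n = (σ^k_{n-1}, n)` repeated `kn - 1` times followed by one final copy of `σ^k_{n-1}`. -/
def sigmaSeq (k : ℕ) : ℕ → List ℕ
  | 0 => []
  | 1 => List.replicate (k - 1) 1
  | n + 2 => (List.replicate (k * (n + 2) - 1) (sigmaSeq k (n + 1) ++ [n + 2])).flatten
      ++ sigmaSeq k (n + 1)
/-- One-step-at-a-time greedy min-flip construction: `greedyList n k t` is the list
`G_0, G_1, …` after `t` attempted extensions, starting at `G_0 = 1⁰2⁰⋯n⁰` and extending
by the smallest flip length `j ∈ {1,…,n}` leading to a permutation not yet in the list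
(the list stops growing when no such `j` exists). -/
def greedyList (n k : ℕ) : ℕ → List (List (ℕ × ℕ))
  | 0 => [idPerm n]
  | t + 1 =>
    let L := greedyList n k t
    match ((List.range n).map (· + 1)).find? (fun j => decide (cflip k j (L.getLastD []) ∉ L)) with
    | some j => L ++ [cflip k j (L.getLastD [])]
    | none => L

namespace GreedyFlip

abbrev CP := List (ℕ × ℕ)

def ColOk (k : ℕ) (p : CP) : Prop := ∀ x ∈ p, x.2 < k

@[simp] lemma colShift_nil (k s : ℕ) : colShift k s [] = [] := rfl
@[simp] lemma colShift_cons (k s : ℕ) (x : ℕ × ℕ) (p : CP) :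
    colShift k s (x :: p) = (x.1, (x.2 + s) % k) :: colShift k s p := rfl
@[simp] lemma colShift_append (k s : ℕ) (p q : CP) :
    colShift k s (p ++ q) = colShift k s p ++ colShift k s q := List.map_append
@[simp] lemma colShift_reverse (k s : ℕ) (p : CP) :
    colShift k s p.reverse = (colShift k s p).reverse := List.map_reverse
@[simp] lemma colShift_length (k s : ℕ) (p : CP) :
    (colShift k s p).length = p.length := List.length_map _
@[simp] lemma colShift_fst (k s : ℕ) (p : CP) :
    (colShift k s p).map Prod.fst = p.map Prod.fst := by
  simp [colShift, Function.comp]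

lemma colShift_colShift (k s t : ℕ) (p : CP) :
    colShift k s (colShift k t p) = colShift k (t + s) p := by
  simp only [colShift, List.map_map]
  refine List.map_congr_left fun x _ => ?_
  simp [Function.comp, Nat.add_assoc, Nat.mod_add_mod]

lemma colShift_zero (k : ℕ) (p : CP) (h : ColOk k p) : colShift k 0 p = p := by
  induction p with
  | nil => rfl
  | cons x p ih =>
    simp only [colShift_cons, Nat.add_zero]
    rw [Nat.mod_eq_of_lt (h x (by simp))]
    rw [ih (fun y hy => h y (by simp [hy]))]

lemma colShift_add_k (k s : ℕ) (p : CP) :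
    colShift k (s + k) p = colShift k s p := by
  refine List.map_congr_left fun x _ => ?_
  simp [← Nat.add_assoc, Nat.add_mod_right]

lemma colOk_colShift (k s : ℕ) (hk : 0 < k) (p : CP) : ColOk k (colShift k s p) := by
  intro x hx
  simp only [colShift, List.mem_map] at hx
  obtain ⟨y, -, rfl⟩ := hx
  exact Nat.mod_lt _ hk

lemma colShift_take (k s j : ℕ) (p : CP) :
    colShift k s (p.take j) = (colShift k s p).take j := List.map_take
lemma colShift_drop (k s j : ℕ) (p : CP) :
    colShift k s (p.drop j) = (colShift k s p).drop j := List.map_drop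

@[simp] lemma cflip_length (k j : ℕ) (p : CP) (h : j ≤ p.length) :
    (cflip k j p).length = p.length := by
  simp [cflip]; omega

lemma cflip_fst_perm (k j : ℕ) (p : CP) :
    ((cflip k j p).map Prod.fst).Perm (p.map Prod.fst) := by
  have : p.map Prod.fst = (p.take j).map Prod.fst ++ (p.drop j).map Prod.fst := by
    rw [← List.map_append, List.take_append_drop]
  rw [this, cflip, List.map_append, colShift_fst]
  exact (((List.reverse_perm _).map _).append_right _)

lemma colOk_cflip (k j : ℕ) (hk : 0 < k) (p : CP) (h : ColOk k p) :
    ColOk k (cflip k j p) := by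
  intro x hx
  rcases List.mem_append.1 hx with hx | hx
  · exact colOk_colShift k 1 hk _ x hx
  · exact h x (List.mem_of_mem_drop hx)

lemma cflip_append_right (k j : ℕ) (u v : CP) (h : j ≤ u.length) :
    cflip k j (u ++ v) = cflip k j u ++ v := by
  simp [cflip, List.take_append_of_le_length h, List.drop_append_of_le_length h,
    List.append_assoc]

lemma cflip_full (k : ℕ) (p : CP) : cflip k p.length p = colShift k 1 p.reverse := by
  simp [cflip]

end GreedyFlip

namespace GreedyFlip

def chain (k : ℕ) : List ℕ → CP → List CP
  | [], p => [p]
  | j :: σ, p => p :: chain k σ (cflip k j p)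

def crun (k : ℕ) : List ℕ → CP → CP
  | [], p => p
  | j :: σ, p => crun k σ (cflip k j p)

@[simp] lemma chain_nil (k : ℕ) (p : CP) : chain k [] p = [p] := rfl
@[simp] lemma chain_cons (k j : ℕ) (σ : List ℕ) (p : CP) :
    chain k (j :: σ) p = p :: chain k σ (cflip k j p) := rfl
@[simp] lemma crun_nil (k : ℕ) (p : CP) : crun k [] p = p := rfl
@[simp] lemma crun_cons (k j : ℕ) (σ : List ℕ) (p : CP) :
    crun k (j :: σ) p = crun k σ (cflip k j p) := rfl

@[simp] lemma chain_length (k : ℕ) (σ : List ℕ) (p : CP) :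
    (chain k σ p).length = σ.length + 1 := by
  induction σ generalizing p with
  | nil => rfl
  | cons j σ ih => simp [ih]

lemma chain_ne_nil (k : ℕ) (σ : List ℕ) (p : CP) : chain k σ p ≠ [] := by
  cases σ <;> simp

lemma chain_append (k j : ℕ) (a b : List ℕ) (p : CP) :
    chain k (a ++ j :: b) p = chain k a p ++ chain k b (cflip k j (crun k a p)) := by
  induction a generalizing p with
  | nil => rfl
  | cons i a ih => simp [ih]

lemma crun_append (k j : ℕ) (a b : List ℕ) (p : CP) :
    crun k (a ++ j :: b) p = crun k b (cflip k j (crun k a p)) := by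
  induction a generalizing p with
  | nil => rfl
  | cons i a ih => simp [ih]

lemma chain_getD_zero (k : ℕ) (σ : List ℕ) (p : CP) : (chain k σ p).getD 0 [] = p := by
  cases σ <;> rfl

lemma chain_getD_succ (k : ℕ) (σ : List ℕ) (p : CP) (i : ℕ) (hi : i < σ.length) :
    (chain k σ p).getD (i + 1) [] =
      cflip k (σ.getD i 0) ((chain k σ p).getD i []) := by
  induction σ generalizing p i with
  | nil => simp at hi
  | cons j σ ih =>
    cases i with
    | zero =>
      simp only [chain_cons, List.getD_cons_succ, List.getD_cons_zero, chain_getD_zero]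
    | succ i =>
      have := ih (cflip k j p) i (by simpa using Nat.lt_of_succ_lt_succ hi)
      simpa using this

lemma chain_getD_length (k : ℕ) (σ : List ℕ) (p : CP) :
    (chain k σ p).getD σ.length [] = crun k σ p := by
  induction σ generalizing p with
  | nil => rfl
  | cons j σ ih => simpa using ih (cflip k j p)

lemma head_mem_chain (k : ℕ) (σ : List ℕ) (p : CP) : p ∈ chain k σ p := by
  cases σ <;> simp

lemma chain_pres (k : ℕ) (P : CP → Prop) (σ : List ℕ) (p : CP)
    (hstep : ∀ q j, j ∈ σ → P q → P (cflip k j q)) (hp : P p) :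
    ∀ x ∈ chain k σ p, P x := by
  induction σ generalizing p with
  | nil => simpa using hp
  | cons j σ ih =>
    intro x hx
    rcases List.mem_cons.1 hx with rfl | hx
    · exact hp
    · exact ih (cflip k j p) (fun q i hi => hstep q i (List.mem_cons_of_mem _ hi))
        (hstep p j List.mem_cons_self hp) x hx

lemma crun_mem_chain (k : ℕ) (σ : List ℕ) (p : CP) : crun k σ p ∈ chain k σ p := by
  induction σ generalizing p with
  | nil => simp
  | cons j σ ih => simp [ih]

/-- properties preserved along a chain whose flips are bounded by the length. -/
lemma chain_invariant (k : ℕ) (hk : 0 < k) (σ : List ℕ) (p : CP)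
    (hσ : ∀ j ∈ σ, j ≤ p.length) (hcol : ColOk k p) :
    ∀ x ∈ chain k σ p,
      x.length = p.length ∧ (x.map Prod.fst).Perm (p.map Prod.fst) ∧ ColOk k x := by
  induction σ generalizing p with
  | nil =>
    intro x hx; simp at hx; subst hx
    exact ⟨rfl, List.Perm.refl _, hcol⟩
  | cons j σ ih =>
    intro x hx
    rcases List.mem_cons.1 hx with rfl | hx
    · exact ⟨rfl, List.Perm.refl _, hcol⟩
    · have hj : j ≤ p.length := hσ j (by simp)
      have hlen : (cflip k j p).length = p.length := cflip_length k j p hj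
      have h := ih (cflip k j p)
        (fun i hi => hlen ▸ hσ i (by simp [hi]))
        (colOk_cflip k j hk p hcol) x hx
      exact ⟨h.1.trans hlen, h.2.1.trans (cflip_fst_perm k j p), h.2.2⟩

lemma crun_length (k : ℕ) (hk : 0 < k) (σ : List ℕ) (p : CP)
    (hσ : ∀ j ∈ σ, j ≤ p.length) (hcol : ColOk k p) :
    (crun k σ p).length = p.length :=
  (chain_invariant k hk σ p hσ hcol _ (crun_mem_chain k σ p)).1

/-- flips that do not reach a suffix leave it in place. -/
lemma chain_suffix (k : ℕ) (σ : List ℕ) (u v : CP) (hσ : ∀ j ∈ σ, j ≤ u.length) :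
    chain k σ (u ++ v) = (chain k σ u).map (· ++ v) := by
  induction σ generalizing u with
  | nil => rfl
  | cons j σ ih =>
    have hj : j ≤ u.length := hσ j (by simp)
    have hlen : (cflip k j u).length = u.length := cflip_length k j u hj
    simp only [chain_cons, cflip_append_right k j u v hj, List.map_cons]
    rw [ih (cflip k j u) (fun i hi => hlen ▸ hσ i (by simp [hi]))]

lemma crun_suffix (k : ℕ) (σ : List ℕ) (u v : CP) (hσ : ∀ j ∈ σ, j ≤ u.length) :
    crun k σ (u ++ v) = crun k σ u ++ v := by
  induction σ generalizing u with
  | nil => rfl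
  | cons j σ ih =>
    have hj : j ≤ u.length := hσ j (by simp)
    have hlen : (cflip k j u).length = u.length := cflip_length k j u hj
    simp only [crun_cons, cflip_append_right k j u v hj]
    exact ih (cflip k j u) (fun i hi => hlen ▸ hσ i (by simp [hi]))

end GreedyFlip

namespace GreedyFlip

def crot (k : ℕ) (p : CP) : CP :=
  ((p.getLastD (0, 0)).1, ((p.getLastD (0, 0)).2 + 1) % k) :: p.dropLast

lemma crot_snoc (k : ℕ) (u : CP) (x : ℕ × ℕ) :
    crot k (u ++ [x]) = (x.1, (x.2 + 1) % k) :: u := by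
  simp [crot]

lemma crot_iter (k : ℕ) (hk : 0 < k) (p : CP) (hp : p ≠ []) (hcol : ColOk k p) :
    ∀ b : ℕ, (crot k)^[b] p =
      colShift k (b / p.length + 1) (p.drop (p.length - b % p.length)) ++
      colShift k (b / p.length) (p.take (p.length - b % p.length)) := by
  have hN : 0 < p.length := List.length_pos_iff.2 hp
  set N := p.length with hNdef
  intro b
  induction b with
  | zero =>
    simp only [Function.iterate_zero_apply, Nat.zero_mod, Nat.zero_div, Nat.sub_zero]
    rw [hNdef, List.drop_length, List.take_length, colShift_nil, List.nil_append,
      colShift_zero k p hcol]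
  | succ b ih =>
    have hr : b % N < N := Nat.mod_lt _ hN
    set q := b / N with hq
    set r := b % N with hrdef
    have hb : N * q + r = b := Nat.div_add_mod b N
    set i := N - r - 1 with hidef
    have hi : i < N := by omega
    have h1 : N - r = i + 1 := by omega
    have htake : p.take (N - r) = p.take i ++ [p.getD i (0, 0)] := by
      rw [List.getD_eq_getElem?_getD, List.getElem?_eq_getElem hi, h1, List.take_succ,
        List.getElem?_eq_getElem hi]
      simp
    have hdrop : p.drop i = p.getD i (0, 0) :: p.drop (N - r) := by
      rw [List.getD_eq_getElem?_getD, List.getElem?_eq_getElem hi,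
        List.drop_eq_getElem_cons hi, h1]
      rfl
    rw [Function.iterate_succ_apply', ih, htake]
    set e := p.getD i (0, 0) with he
    have hcs : colShift k q (p.take i ++ [e]) =
        colShift k q (p.take i) ++ [(e.1, (e.2 + q) % k)] := by
      simp [colShift]
    rw [hcs, ← List.append_assoc, crot_snoc]
    have hbump : (((e.1, (e.2 + q) % k) : ℕ × ℕ).1, ((e.1, (e.2 + q) % k).2 + 1) % k)
        = (e.1, (e.2 + (q + 1)) % k) := by
      simp [Nat.mod_add_mod, Nat.add_assoc]
    rw [hbump]
    have hmain : (e.1, (e.2 + (q + 1)) % k) ::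
        (colShift k (q + 1) (p.drop (N - r)) ++ colShift k q (p.take i)) =
        colShift k (q + 1) (p.drop (N - (r + 1))) ++ colShift k q (p.take (N - (r + 1))) := by
      have h2 : N - (r + 1) = i := by omega
      rw [h2, hdrop]
      simp [colShift]
    rw [hmain]
    by_cases hcase : r + 1 < N
    · have hstep : b + 1 = (r + 1) + q * N := by
        rw [← hb, Nat.add_assoc, Nat.add_comm (N * q), Nat.mul_comm N q]
      have hdiv : (b + 1) / N = q := by
        rw [hstep, Nat.add_mul_div_right _ _ hN, Nat.div_eq_of_lt hcase, Nat.zero_add]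
      have hmod : (b + 1) % N = r + 1 := by
        rw [hstep, Nat.add_mul_mod_self_right, Nat.mod_eq_of_lt hcase]
      rw [hdiv, hmod]
    · have hrN : r + 1 = N := by omega
      have hstep : b + 1 = N * (q + 1) := by
        rw [← hb, Nat.mul_succ, Nat.add_assoc, hrN]
      have hdiv : (b + 1) / N = q + 1 := by rw [hstep, Nat.mul_div_cancel_left _ hN]
      have hmod : (b + 1) % N = 0 := by rw [hstep, Nat.mul_mod_right]
      rw [hdiv, hmod, hrN]
      rw [Nat.sub_self, Nat.sub_zero, List.take_zero, List.drop_zero, colShift_nil,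
        List.append_nil, hNdef, List.drop_length, List.take_length, colShift_nil,
        List.nil_append]

lemma sym_iter (k : ℕ) (hk : 0 < k) (p : CP) (hp : p ≠ []) (hcol : ColOk k p) (b : ℕ) :
    ((crot k)^[b] p).getLastD (0, 0) =
      ((p.getD (p.length - b % p.length - 1) (0, 0)).1,
       ((p.getD (p.length - b % p.length - 1) (0, 0)).2 + b / p.length) % k) := by
  have hN : 0 < p.length := List.length_pos_iff.2 hp
  set N := p.length with hNdef
  have hr : b % N < N := Nat.mod_lt _ hN
  set i := N - b % N - 1 with hidef
  have hi : i < N := by omega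
  have h1 : N - b % N = i + 1 := by omega
  have htake : p.take (N - b % N) = p.take i ++ [p.getD i (0, 0)] := by
    rw [List.getD_eq_getElem?_getD, List.getElem?_eq_getElem hi, h1, List.take_succ,
      List.getElem?_eq_getElem hi]
    simp
  rw [crot_iter k hk p hp hcol b, htake]
  simp [colShift, hNdef]

end GreedyFlip

namespace GreedyFlip

lemma fst_getD (p : CP) {i : ℕ} (hi : i < p.length) :
    (p.getD i (0, 0)).1 = (p.map Prod.fst).getD i 0 := by
  rw [List.getD_eq_getElem?_getD, List.getD_eq_getElem?_getD,
    List.getElem?_eq_getElem hi, List.getElem?_eq_getElem (by simpa using hi)]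
  simp

lemma mod_shift_inj {k c q q' : ℕ} (hq : q < k) (hq' : q' < k)
    (h : (c + q) % k = (c + q') % k) : q = q' := by
  have h2 : q ≡ q' [MOD k] := Nat.ModEq.add_left_cancel' c h
  rw [Nat.ModEq, Nat.mod_eq_of_lt hq, Nat.mod_eq_of_lt hq'] at h2
  exact h2

lemma crot_ne_nil (k : ℕ) (p : CP) : crot k p ≠ [] := by simp [crot]

lemma crot_props (k : ℕ) (p : CP) (hp : p ≠ []) :
    (crot k p).length = p.length ∧ ((crot k p).map Prod.fst).Perm (p.map Prod.fst) := by
  obtain ⟨u, x, rfl⟩ := List.eq_nil_or_concat p |>.resolve_left hp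
  rw [List.concat_eq_append, crot_snoc]
  refine ⟨by simp, ?_⟩
  simp only [List.map_cons, List.map_append, List.map_nil]
  exact (List.perm_append_singleton _ _).symm

lemma colOk_crot (k : ℕ) (hk : 0 < k) (p : CP) (hp : p ≠ []) (h : ColOk k p) :
    ColOk k (crot k p) := by
  obtain ⟨u, x, rfl⟩ := List.eq_nil_or_concat p |>.resolve_left hp
  rw [List.concat_eq_append, crot_snoc]
  intro y hy
  rcases List.mem_cons.1 hy with rfl | hy
  · exact Nat.mod_lt _ hk
  · exact h y (by simp [hy])

lemma crot_iter_props (k : ℕ) (hk : 0 < k) (p : CP) (hp : p ≠ []) (hcol : ColOk k p)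
    (hnd : (p.map Prod.fst).Nodup) (b : ℕ) :
    (crot k)^[b] p ≠ [] ∧ ((crot k)^[b] p).length = p.length ∧
      (((crot k)^[b] p).map Prod.fst).Perm (p.map Prod.fst) ∧ ColOk k ((crot k)^[b] p) ∧
      (((crot k)^[b] p).map Prod.fst).Nodup := by
  induction b with
  | zero => exact ⟨hp, rfl, List.Perm.refl _, hcol, hnd⟩
  | succ b ih =>
    obtain ⟨h1, h2, h3, h4, h5⟩ := ih
    rw [Function.iterate_succ_apply']
    refine ⟨crot_ne_nil k _, ?_, ?_, colOk_crot k hk _ h1 h4, ?_⟩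
    · rw [(crot_props k _ h1).1, h2]
    · exact ((crot_props k _ h1).2).trans h3
    · exact ((crot_props k _ h1).2).nodup_iff.2 h5

lemma sym_inj (k : ℕ) (hk : 0 < k) (p : CP) (hp : p ≠ []) (hcol : ColOk k p)
    (hnd : (p.map Prod.fst).Nodup) {b b' : ℕ}
    (hb : b < k * p.length) (hb' : b' < k * p.length)
    (h : ((crot k)^[b] p).getLastD (0, 0) = ((crot k)^[b'] p).getLastD (0, 0)) : b = b' := by
  have hN : 0 < p.length := List.length_pos_iff.2 hp
  set N := p.length with hNdef
  rw [sym_iter k hk p hp hcol b, sym_iter k hk p hp hcol b'] at h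
  have hrb : b % N < N := Nat.mod_lt _ hN
  have hrb' : b' % N < N := Nat.mod_lt _ hN
  have hi : N - b % N - 1 < N := by omega
  have hi' : N - b' % N - 1 < N := by omega
  rw [Prod.mk.injEq] at h
  obtain ⟨hfst, hcolr⟩ := h
  rw [fst_getD p hi, fst_getD p hi'] at hfst
  have hlenm : (p.map Prod.fst).length = N := by simp [hNdef]
  rw [List.getD_eq_getElem?_getD, List.getD_eq_getElem?_getD,
    List.getElem?_eq_getElem (by omega : N - b % N - 1 < (p.map Prod.fst).length),
    List.getElem?_eq_getElem (by omega : N - b' % N - 1 < (p.map Prod.fst).length),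
    Option.getD_some, Option.getD_some] at hfst
  have hidx : N - b % N - 1 = N - b' % N - 1 := (hnd.getElem_inj_iff).1 hfst
  have hmod : b % N = b' % N := by omega
  have hq : b / N < k := (Nat.div_lt_iff_lt_mul hN).2 hb
  have hq' : b' / N < k := (Nat.div_lt_iff_lt_mul hN).2 hb'
  rw [← hidx] at hcolr
  have hdiv : b / N = b' / N := mod_shift_inj hq hq' hcolr
  have e1 := Nat.div_add_mod b N
  have e2 := Nat.div_add_mod b' N
  calc b = N * (b / N) + b % N := e1.symm
  _ = N * (b' / N) + b' % N := by rw [hdiv, hmod]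
  _ = b' := e2

lemma sym_surj (k : ℕ) (hk : 0 < k) (p : CP) (hp : p ≠ []) (hcol : ColOk k p)
    (v c : ℕ) (hv : v ∈ p.map Prod.fst) (hc : c < k) :
    ∃ b < k * p.length, ((crot k)^[b] p).getLastD (0, 0) = (v, c) := by
  have hN : 0 < p.length := List.length_pos_iff.2 hp
  set N := p.length with hNdef
  obtain ⟨i, hilen, hig⟩ := List.mem_iff_getElem.1 hv
  have hiN : i < N := by simpa using hilen
  set ci := (p.getD i (0, 0)).2 with hci
  have hcilt : ci < k := by
    rw [hci, List.getD_eq_getElem?_getD, List.getElem?_eq_getElem hiN]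
    exact hcol _ (List.getElem_mem _)
  set q := (c + k - ci) % k with hqdef
  have hqk : q < k := Nat.mod_lt _ hk
  refine ⟨q * N + (N - 1 - i), ?_, ?_⟩
  · calc q * N + (N - 1 - i) < q * N + N := by omega
    _ = (q + 1) * N := by rw [Nat.succ_mul]
    _ ≤ k * N := Nat.mul_le_mul_right N hqk
  · have hr : N - 1 - i < N := by omega
    have hdiv : (q * N + (N - 1 - i)) / N = q := by
      rw [Nat.add_comm, Nat.add_mul_div_right _ _ hN, Nat.div_eq_of_lt hr, Nat.zero_add]
    have hmod : (q * N + (N - 1 - i)) % N = N - 1 - i := by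
      rw [Nat.add_comm, Nat.add_mul_mod_self_right, Nat.mod_eq_of_lt hr]
    rw [sym_iter k hk p hp hcol _, hdiv, hmod]
    have hidx : N - (N - 1 - i) - 1 = i := by omega
    rw [hidx]
    have hfst : (p.getD i (0, 0)).1 = v := by
      rw [List.getD_eq_getElem?_getD, List.getElem?_eq_getElem hiN, Option.getD_some]
      rw [List.getElem_map] at hig
      exact hig
    have hsnd : (ci + q) % k = c := by
      rw [hqdef, Nat.add_mod_mod]
      have h2 : ci + (c + k - ci) = c + k := by omega
      rw [h2, Nat.add_mod_right, Nat.mod_eq_of_lt hc]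
    rw [Prod.ext_iff]
    exact ⟨hfst, by rw [← hci]; exact hsnd⟩

end GreedyFlip

namespace GreedyFlip

lemma getD_append_left {α : Type} {l l' : List α} {i : ℕ} (h : i < l.length) (d : α) :
    (l ++ l').getD i d = l.getD i d := by
  rw [List.getD_eq_getElem?_getD, List.getD_eq_getElem?_getD, List.getElem?_append]
  simp [h]

lemma getD_append_right' {α : Type} {l l' : List α} {i : ℕ} (h : l.length ≤ i) (d : α) :
    (l ++ l').getD i d = l'.getD (i - l.length) d := by
  rw [List.getD_eq_getElem?_getD, List.getD_eq_getElem?_getD, List.getElem?_append_right h]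

lemma getD_map' {α β : Type} (f : α → β) {l : List α} {i : ℕ} (h : i < l.length) (d : β) (d' : α) :
    (l.map f).getD i d = f (l.getD i d') := by
  rw [List.getD_eq_getElem?_getD, List.getD_eq_getElem?_getD,
    List.getElem?_eq_getElem (by simpa using h), List.getElem?_eq_getElem h]
  simp

lemma mem_of_getD {α : Type} {l : List α} {i : ℕ} (h : i < l.length) (d : α) :
    l.getD i d ∈ l := by
  rw [List.getD_eq_getElem?_getD, List.getElem?_eq_getElem h]
  exact List.getElem_mem h

lemma flatten_replicate_length {α : Type} (c : ℕ) (l : List α) :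
    ((List.replicate c l).flatten).length = c * l.length := by
  induction c with
  | zero => simp
  | succ c ih => simp [List.replicate_succ, ih, Nat.succ_mul, Nat.add_comm]

lemma sigma_bounds (k : ℕ) : ∀ n, ∀ j ∈ sigmaSeq k n, 1 ≤ j ∧ j ≤ n := by
  intro n
  induction n using Nat.strong_induction_on with
  | _ n ih =>
    match n with
    | 0 => intro j hj; simp [sigmaSeq] at hj
    | 1 =>
      intro j hj
      simp only [sigmaSeq, List.mem_replicate] at hj
      omega
    | n + 2 =>
      intro j hj
      simp only [sigmaSeq, List.mem_append, List.mem_flatten, List.mem_replicate] at hj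
      rcases hj with ⟨l, ⟨-, rfl⟩, hl⟩ | hj
      · rcases List.mem_append.1 hl with hl | hl
        · have := ih (n + 1) (by omega) j hl; omega
        · simp at hl; omega
      · have := ih (n + 1) (by omega) j hj; omega

lemma sigma_length (k : ℕ) (hk : 1 ≤ k) : ∀ n, 1 ≤ n →
    (sigmaSeq k n).length + 1 = k ^ n * n.factorial := by
  intro n
  induction n using Nat.strong_induction_on with
  | _ n ih =>
    match n with
    | 0 => intro h0; omega
    | 1 =>
      intro _
      simp [sigmaSeq, Nat.factorial]
      omega
    | n + 2 =>
      intro _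
      have IH := ih (n + 1) (by omega) (by omega)
      have hm : 1 ≤ k * (n + 2) := Nat.mul_pos hk (by omega)
      simp only [sigmaSeq, List.length_append, flatten_replicate_length,
        List.length_replicate, List.length_append, List.length_singleton]
      have key : (k * (n + 2) - 1) * ((sigmaSeq k (n + 1)).length + 1) +
          (sigmaSeq k (n + 1)).length + 1 = (k * (n + 2)) * ((sigmaSeq k (n + 1)).length + 1) := by
        have h2 : k * (n + 2) - 1 + 1 = k * (n + 2) := by omega
        calc (k * (n + 2) - 1) * ((sigmaSeq k (n + 1)).length + 1) +
            (sigmaSeq k (n + 1)).length + 1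
            = (k * (n + 2) - 1 + 1) * ((sigmaSeq k (n + 1)).length + 1) := by ring
        _ = (k * (n + 2)) * ((sigmaSeq k (n + 1)).length + 1) := by rw [h2]
      calc (k * (n + 2) - 1) * ((sigmaSeq k (n + 1)).length + 1) + (sigmaSeq k (n + 1)).length + 1
          = (k * (n + 2)) * ((sigmaSeq k (n + 1)).length + 1) := key
      _ = (k * (n + 2)) * (k ^ (n + 1) * (n + 1).factorial) := by rw [IH]
      _ = k ^ (n + 2) * (n + 2).factorial := by
          have h3 : (n + 2).factorial = (n + 2) * (n + 1).factorial := rfl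
          rw [h3, pow_succ]
          ring

end GreedyFlip

namespace GreedyFlip

def MainProp (k n : ℕ) : Prop :=
  ∀ p : CP, p.length = n → (p.map Prod.fst).Nodup → ColOk k p →
    (chain k (sigmaSeq k n) p).Nodup ∧
    (∀ q : CP, (q.map Prod.fst).Perm (p.map Prod.fst) → ColOk k q →
      q ∈ chain k (sigmaSeq k n) p) ∧
    crun k (sigmaSeq k n) p = colShift k (k - 1) p.reverse ∧
    (∀ i < (sigmaSeq k n).length, ∀ j, 1 ≤ j → j < (sigmaSeq k n).getD i 0 →
      cflip k j ((chain k (sigmaSeq k n) p).getD i []) ∈ (chain k (sigmaSeq k n) p).take (i + 1))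

lemma colOk_sublist {k : ℕ} {l l' : CP} (h : List.Sublist l l') (hc : ColOk k l') : ColOk k l :=
  fun x hx => hc x (h.mem hx)

lemma block_pack (k n : ℕ) (hk : 0 < k) (IH : MainProp k (n + 1))
    (p : CP) (hlen : p.length = n + 2) (hnd : (p.map Prod.fst).Nodup) (hcol : ColOk k p) :
    (chain k (sigmaSeq k (n + 1)) p).Nodup ∧
    (∀ y ∈ chain k (sigmaSeq k (n + 1)) p, y.getLastD (0, 0) = p.getLastD (0, 0)) ∧
    (∀ q : CP, (q.map Prod.fst).Perm (p.map Prod.fst) → ColOk k q →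
        q.getLastD (0, 0) = p.getLastD (0, 0) → q ∈ chain k (sigmaSeq k (n + 1)) p) ∧
    (∀ i < (sigmaSeq k (n + 1)).length, ∀ j, 1 ≤ j → j < (sigmaSeq k (n + 1)).getD i 0 →
        cflip k j ((chain k (sigmaSeq k (n + 1)) p).getD i [])
          ∈ (chain k (sigmaSeq k (n + 1)) p).take (i + 1)) ∧
    (∀ j, 1 ≤ j → j ≤ n + 1 → cflip k j (crun k (sigmaSeq k (n + 1)) p)
        ∈ chain k (sigmaSeq k (n + 1)) p) ∧
    cflip k (n + 2) (crun k (sigmaSeq k (n + 1)) p) = crot k p := by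
  set σ := sigmaSeq k (n + 1) with hσdef
  have hpne : p ≠ [] := by intro h; rw [h] at hlen; simp at hlen
  obtain ⟨u, x, hp⟩ := (List.eq_nil_or_concat p).resolve_left hpne
  rw [List.concat_eq_append] at hp
  subst hp
  have hu : u.length = n + 1 := by simpa using hlen
  have hbound : ∀ j ∈ σ, j ≤ u.length := by
    intro j hj; rw [hu]; exact (sigma_bounds k (n + 1) j hj).2
  have hndu : (u.map Prod.fst).Nodup := by
    rw [List.map_append] at hnd; exact hnd.of_append_left
  have hcolu : ColOk k u := colOk_sublist (by simp) hcol
  obtain ⟨Nu, Cu, Ru, Mu⟩ := IH u hu hndu hcolu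
  have hE1 : chain k σ (u ++ [x]) = (chain k σ u).map (· ++ [x]) :=
    chain_suffix k σ u [x] hbound
  have hE2 : crun k σ (u ++ [x]) = crun k σ u ++ [x] := crun_suffix k σ u [x] hbound
  have hrunlen : (crun k σ u).length = u.length := crun_length k hk σ u hbound hcolu
  have hlastp : (u ++ [x]).getLastD (0, 0) = x := List.getLastD_concat
  -- block completeness
  have hC : ∀ q : CP, (q.map Prod.fst).Perm ((u ++ [x]).map Prod.fst) → ColOk k q →
      q.getLastD (0, 0) = x → q ∈ chain k σ (u ++ [x]) := by
    intro q hperm hqcol hqlast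
    have hqlen : q.length = n + 2 := by
      have := hperm.length_eq; simp at this; omega
    have hqne : q ≠ [] := by intro h; rw [h] at hqlen; simp at hqlen
    obtain ⟨w, y, hq⟩ := (List.eq_nil_or_concat q).resolve_left hqne
    rw [List.concat_eq_append] at hq
    subst hq
    have hyx : y = x := by rw [List.getLastD_concat] at hqlast; exact hqlast
    subst hyx
    have hwperm : (w.map Prod.fst).Perm (u.map Prod.fst) := by
      rw [List.map_append, List.map_append] at hperm
      exact (List.perm_append_right_iff _).1 hperm
    have hwcol : ColOk k w := colOk_sublist (by simp) hqcol
    have hwlen : w.length = n + 1 := by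
      have := hwperm.length_eq; simp at this; omega
    have hw : w ∈ chain k σ u := Cu w hwperm hwcol
    rw [hE1]
    exact List.mem_map_of_mem hw
  rw [hlastp]
  refine ⟨?_, ?_, hC, ?_, ?_, ?_⟩
  · rw [hE1]
    exact Nu.map (List.append_left_injective [x])
  · intro y hy
    rw [hE1] at hy
    obtain ⟨w, -, rfl⟩ := List.mem_map.1 hy
    rw [List.getLastD_concat]
  · -- in-block minimality
    intro i hi j hj1 hj2
    have hjle : j ≤ n + 1 := by
      have := (sigma_bounds k (n + 1) _ (mem_of_getD hi 0)).2; omega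
    have hgd : (chain k σ (u ++ [x])).getD i [] = (chain k σ u).getD i [] ++ [x] := by
      rw [hE1]; exact getD_map' _ (by rw [chain_length]; omega) _ []
    have hlen_el : ((chain k σ u).getD i []).length = u.length :=
      (chain_invariant k hk σ u hbound hcolu _ (mem_of_getD (by rw [chain_length]; omega) [])).1
    rw [hgd, cflip_append_right k j _ [x] (by omega)]
    have hmem := Mu i hi j hj1 hj2
    rw [hE1, ← List.map_take]
    exact List.mem_map_of_mem hmem
  · -- boundary flips of length ≤ n+1 are already in the block
    intro j hj1 hj2
    rw [hE2, cflip_append_right k j _ [x] (by omega)]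
    apply hC
    · rw [List.map_append, List.map_append]
      refine ((cflip_fst_perm k j _).trans ?_).append_right _
      exact (chain_invariant k hk σ u hbound hcolu _ (crun_mem_chain k σ u)).2.1
    · intro z hz
      rcases List.mem_append.1 hz with hz | hz
      · exact colOk_cflip k j hk _ (chain_invariant k hk σ u hbound hcolu _
          (crun_mem_chain k σ u)).2.2 z hz
      · simp only [List.mem_singleton] at hz
        exact hcol z (by simp [hz])
    · exact List.getLastD_concat
  · -- the full flip is the rotation
    have hfull : (crun k σ (u ++ [x])).length = n + 2 := by
      rw [hE2]; simp [hrunlen, hu]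
    have : cflip k (n + 2) (crun k σ (u ++ [x]))
        = colShift k 1 (crun k σ (u ++ [x])).reverse := by
      rw [← hfull, cflip_full]
    rw [this, hE2, Ru]
    rw [List.reverse_append]
    simp only [List.reverse_singleton, List.singleton_append]
    rw [← colShift_reverse, List.reverse_reverse]
    rw [colShift_cons, colShift_colShift]
    have hk1 : k - 1 + 1 = k := by omega
    rw [hk1]
    have : colShift k k u = u := by
      have h0 := colShift_add_k k 0 u
      rw [Nat.zero_add] at h0
      rw [h0, colShift_zero k u hcolu]
    rw [this, crot_snoc]

end GreedyFlip

namespace GreedyFlip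

lemma helper (k n : ℕ) (hk : 0 < k) (IH : MainProp k (n + 1)) :
    ∀ c, c < k * (n + 2) → ∀ p : CP, p.length = n + 2 →
    (p.map Prod.fst).Nodup → ColOk k p →
    ((chain k ((List.replicate c (sigmaSeq k (n + 1) ++ [n + 2])).flatten
        ++ sigmaSeq k (n + 1)) p).Nodup ∧
    (∀ y ∈ chain k ((List.replicate c (sigmaSeq k (n + 1) ++ [n + 2])).flatten
        ++ sigmaSeq k (n + 1)) p,
      ∃ b ≤ c, y.getLastD (0, 0) = ((crot k)^[b] p).getLastD (0, 0)) ∧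
    (∀ (q : CP) (b : ℕ), (q.map Prod.fst).Perm (p.map Prod.fst) → ColOk k q → b ≤ c →
      q.getLastD (0, 0) = ((crot k)^[b] p).getLastD (0, 0) →
      q ∈ chain k ((List.replicate c (sigmaSeq k (n + 1) ++ [n + 2])).flatten
        ++ sigmaSeq k (n + 1)) p) ∧
    (∀ i < ((List.replicate c (sigmaSeq k (n + 1) ++ [n + 2])).flatten
        ++ sigmaSeq k (n + 1)).length, ∀ j, 1 ≤ j →
      j < ((List.replicate c (sigmaSeq k (n + 1) ++ [n + 2])).flatten
        ++ sigmaSeq k (n + 1)).getD i 0 →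
      cflip k j ((chain k ((List.replicate c (sigmaSeq k (n + 1) ++ [n + 2])).flatten
        ++ sigmaSeq k (n + 1)) p).getD i [])
        ∈ (chain k ((List.replicate c (sigmaSeq k (n + 1) ++ [n + 2])).flatten
        ++ sigmaSeq k (n + 1)) p).take (i + 1)) ∧
    crun k ((List.replicate c (sigmaSeq k (n + 1) ++ [n + 2])).flatten
        ++ sigmaSeq k (n + 1)) p = crun k (sigmaSeq k (n + 1)) ((crot k)^[c] p)) := by
  set σ := sigmaSeq k (n + 1) with hσdef
  intro c
  induction c with
  | zero =>
    intro hc p hlen hnd hcol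
    obtain ⟨BN, BL, BC, BM, Bbdry, BE3⟩ := block_pack k n hk IH p hlen hnd hcol
    simp only [List.replicate_zero, List.flatten_nil, List.nil_append]
    refine ⟨BN, ?_, ?_, BM, by rw [Function.iterate_zero_apply]⟩
    · intro y hy
      exact ⟨0, Nat.le_refl 0, by rw [Function.iterate_zero_apply]; exact BL y hy⟩
    · intro q b hperm hcolq hb hlast
      have hb0 : b = 0 := by omega
      subst hb0
      rw [Function.iterate_zero_apply] at hlast
      exact BC q hperm hcolq hlast
  | succ c ihc =>
    intro hc p hlen hnd hcol
    obtain ⟨BN, BL, BC, BM, Bbdry, BE3⟩ := block_pack k n hk IH p hlen hnd hcol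
    have hpne : p ≠ [] := by intro h; rw [h] at hlen; simp at hlen
    set rest := (List.replicate c (σ ++ [n + 2])).flatten ++ σ with hrest
    have hrw : (List.replicate (c + 1) (σ ++ [n + 2])).flatten ++ σ
        = σ ++ ((n + 2) :: rest) := by
      simp [List.replicate_succ, List.append_assoc, hrest]
    set p' := crot k p with hp'
    have hp'ne : p' ≠ [] := crot_ne_nil k p
    have hp'props := crot_props k p hpne
    have hp'len : p'.length = n + 2 := by rw [hp'props.1, hlen]
    have hp'nd : (p'.map Prod.fst).Nodup := hp'props.2.nodup_iff.2 hnd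
    have hp'col : ColOk k p' := colOk_crot k hk p hpne hcol
    obtain ⟨A', B', C', D', E'⟩ := ihc (by omega) p' hp'len hp'nd hp'col
    have CD : chain k ((List.replicate (c + 1) (σ ++ [n + 2])).flatten ++ σ) p
        = chain k σ p ++ chain k rest p' := by
      rw [hrw, chain_append, BE3]
    have hElen : crun k ((List.replicate (c + 1) (σ ++ [n + 2])).flatten ++ σ) p
        = crun k σ ((crot k)^[c + 1] p) := by
      rw [hrw, crun_append, BE3, E', ← Function.iterate_succ_apply]
    have hsymshift : ∀ b, ((crot k)^[b] p').getLastD (0, 0)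
        = ((crot k)^[b + 1] p).getLastD (0, 0) := by
      intro b; rw [hp', ← Function.iterate_succ_apply]
    have hB0len : (chain k σ p).length = σ.length + 1 := chain_length k σ p
    have hD'len : (chain k rest p').length = rest.length + 1 := chain_length k rest p'
    have hDis : ∀ a ∈ chain k σ p, a ∉ chain k rest p' := by
      intro a ha hmem
      obtain ⟨b, hb, heq⟩ := B' a hmem
      have h0 : a.getLastD (0, 0) = ((crot k)^[0] p).getLastD (0, 0) := by
        rw [Function.iterate_zero_apply]; exact BL a ha
      rw [heq, hsymshift b] at h0
      have hkN : 0 < k * (n + 2) := Nat.mul_pos hk (by omega)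
      have h1b : (0 : ℕ) < k * p.length := by rw [hlen]; exact hkN
      have h2b : b + 1 < k * p.length := by
        rw [hlen]; exact Nat.lt_of_le_of_lt (by omega) hc
      have := sym_inj k hk p hpne hcol hnd h1b h2b h0.symm
      omega
    refine ⟨?_, ?_, ?_, ?_, hElen⟩
    · rw [CD]
      exact List.nodup_append.2 ⟨BN, A', fun a ha b hb hab => hDis a ha (hab ▸ hb)⟩
    · intro y hy
      rw [CD] at hy
      rcases List.mem_append.1 hy with hy | hy
      · exact ⟨0, by omega, by rw [Function.iterate_zero_apply]; exact BL y hy⟩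
      · obtain ⟨b, hb, heq⟩ := B' y hy
        exact ⟨b + 1, by omega, by rw [heq, hsymshift b]⟩
    · intro q b hperm hcolq hb hlast
      rw [CD]
      cases b with
      | zero =>
        refine List.mem_append_left _ (BC q hperm hcolq ?_)
        rwa [Function.iterate_zero_apply] at hlast
      | succ b =>
        refine List.mem_append_right _ (C' q b (hperm.trans hp'props.2.symm) hcolq
          (by omega) ?_)
        rw [hsymshift b]; exact hlast
    · intro i hi j hj1 hj2
      rw [hrw] at hi hj2
      rw [List.length_append, List.length_cons] at hi
      rcases Nat.lt_trichotomy i σ.length with hcase | hcase | hcase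
      · have h1 : (σ ++ ((n + 2) :: rest)).getD i 0 = σ.getD i 0 :=
          getD_append_left hcase 0
        rw [h1] at hj2
        have h2 : (chain k ((List.replicate (c + 1) (σ ++ [n + 2])).flatten ++ σ) p).getD i []
            = (chain k σ p).getD i [] := by
          rw [CD]; exact getD_append_left (by omega) []
        have h3 : (chain k ((List.replicate (c + 1) (σ ++ [n + 2])).flatten ++ σ) p).take (i + 1)
            = (chain k σ p).take (i + 1) := by
          rw [CD]; exact List.take_append_of_le_length (by omega)
        rw [h2, h3]
        exact BM i hcase j hj1 hj2
      · subst hcase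
        have h1 : (σ ++ ((n + 2) :: rest)).getD σ.length 0 = n + 2 := by
          rw [getD_append_right' (Nat.le_refl _) 0, Nat.sub_self]
          rfl
        rw [h1] at hj2
        have h2 : (chain k ((List.replicate (c + 1) (σ ++ [n + 2])).flatten ++ σ) p).getD
            σ.length [] = crun k σ p := by
          rw [CD, getD_append_left (by omega) [], chain_getD_length]
        have h3 : (chain k ((List.replicate (c + 1) (σ ++ [n + 2])).flatten ++ σ) p).take
            (σ.length + 1) = chain k σ p := by
          rw [CD, ← hB0len, List.take_left]
        rw [h2, h3]
        exact Bbdry j hj1 (by omega)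
      · set i' := i - σ.length - 1 with hi'
        have hii : i = σ.length + 1 + i' := by omega
        have hi'lt : i' < rest.length := by omega
        have h1 : (σ ++ ((n + 2) :: rest)).getD i 0 = rest.getD i' 0 := by
          rw [getD_append_right' (by omega) 0]
          have : i - σ.length = i' + 1 := by omega
          rw [this]
          rfl
        rw [h1] at hj2
        have h2 : (chain k ((List.replicate (c + 1) (σ ++ [n + 2])).flatten ++ σ) p).getD i []
            = (chain k rest p').getD i' [] := by
          rw [CD, getD_append_right' (by omega) []]
          have : i - (chain k σ p).length = i' := by omega
          rw [this]
        have h3 : (chain k ((List.replicate (c + 1) (σ ++ [n + 2])).flatten ++ σ) p).take (i + 1)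
            = chain k σ p ++ (chain k rest p').take (i' + 1) := by
          rw [CD, ← List.take_length_add_append (l₁ := chain k σ p) (l₂ := chain k rest p') (i' + 1),
            hB0len]
          congr 1
          omega
        rw [h2, h3]
        exact List.mem_append_right _ (D' i' hi'lt j hj1 hj2)

end GreedyFlip

namespace GreedyFlip

lemma cflip_one (k v c : ℕ) : cflip k 1 [(v, c)] = [(v, (c + 1) % k)] := by
  simp [cflip, colShift]

lemma chain_rep1 (k : ℕ) : ∀ (t v c : ℕ), c < k →
    chain k (List.replicate t 1) [(v, c)]
      = (List.range (t + 1)).map (fun s => [(v, (c + s) % k)]) := by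
  intro t
  induction t with
  | zero =>
    intro v c hc
    simp [List.range_succ, Nat.mod_eq_of_lt hc]
  | succ t ih =>
    intro v c hc
    have hk0 : 0 < k := by omega
    rw [List.replicate_succ, chain_cons, cflip_one, ih v ((c + 1) % k) (Nat.mod_lt _ hk0)]
    conv_rhs => rw [List.range_succ_eq_map]
    rw [List.map_cons, List.map_map]
    congr 1
    · simp [Nat.mod_eq_of_lt hc]
    · refine List.map_congr_left fun s _ => ?_
      simp only [Function.comp_apply, Nat.succ_eq_add_one]
      rw [Nat.mod_add_mod, Nat.add_assoc, Nat.add_comm 1 s]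

lemma crun_rep1 (k : ℕ) : ∀ (t v c : ℕ), c < k →
    crun k (List.replicate t 1) [(v, c)] = [(v, (c + t) % k)] := by
  intro t
  induction t with
  | zero => intro v c hc; simp [Nat.mod_eq_of_lt hc]
  | succ t ih =>
    intro v c hc
    have hk0 : 0 < k := by omega
    rw [List.replicate_succ, crun_cons, cflip_one, ih v ((c + 1) % k) (Nat.mod_lt _ hk0)]
    rw [Nat.mod_add_mod, Nat.add_assoc, Nat.add_comm 1 t]

theorem mainThm (k : ℕ) (hk : 0 < k) : ∀ n, 1 ≤ n → MainProp k n := by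
  intro n
  induction n using Nat.strong_induction_on with
  | _ n ih =>
    match n with
    | 0 => intro h0; omega
    | 1 =>
      intro _ p hlen hnd hcol
      obtain ⟨x, rfl⟩ := List.length_eq_one_iff.1 hlen
      obtain ⟨v, c⟩ := x
      have hc : c < k := hcol (v, c) (by simp)
      have hσ : sigmaSeq k 1 = List.replicate (k - 1) 1 := rfl
      have hkk : k - 1 + 1 = k := by omega
      have hch : chain k (sigmaSeq k 1) [(v, c)]
          = (List.range k).map (fun s => [(v, (c + s) % k)]) := by
        rw [hσ, chain_rep1 k (k - 1) v c hc, hkk]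
      refine ⟨?_, ?_, ?_, ?_⟩
      · rw [hch]
        refine List.Nodup.map_on ?_ List.nodup_range
        intro s hs s' hs' heq
        have heq2 : (c + s) % k = (c + s') % k := by simpa using heq
        exact mod_shift_inj (by simpa using hs) (by simpa using hs') heq2
      · intro q hperm hcolq
        have hq1 : (q.map Prod.fst).Perm [v] := by simpa using hperm
        have hq2 : q.map Prod.fst = [v] := List.perm_singleton.1 hq1
        have hqlen : q.length = 1 := by
          have := congrArg List.length hq2; simpa using this
        obtain ⟨y, rfl⟩ := List.length_eq_one_iff.1 hqlen
        have hy1 : y.1 = v := by simpa using hq2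
        have hy2 : y.2 < k := hcolq y (by simp)
        rw [hch]
        set s := (y.2 + k - c) % k with hs
        have hsk : s < k := Nat.mod_lt _ (by omega)
        refine List.mem_map.2 ⟨s, List.mem_range.2 hsk, ?_⟩
        have hmod : (c + s) % k = y.2 := by
          rw [hs, Nat.add_mod_mod]
          have h2 : c + (y.2 + k - c) = y.2 + k := by omega
          rw [h2, Nat.add_mod_right, Nat.mod_eq_of_lt hy2]
        rw [hmod, ← hy1, Prod.mk.eta]
      · rw [hσ, crun_rep1 k (k - 1) v c hc]
        simp [colShift]
      · intro i hi j hj1 hj2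
        have h1 : (sigmaSeq k 1).getD i 0 = 1 := by
          have := mem_of_getD hi 0
          rw [hσ, List.mem_replicate] at this
          exact this.2
        rw [h1] at hj2
        omega
    | n + 2 =>
      intro _ p hlen hnd hcol
      have IH : MainProp k (n + 1) := ih (n + 1) (by omega) (by omega)
      have hkN : 0 < k * (n + 2) := Nat.mul_pos hk (by omega)
      have hpne : p ≠ [] := by intro h; rw [h] at hlen; simp at hlen
      obtain ⟨A, B, C, E, R⟩ := helper k n hk IH (k * (n + 2) - 1) (by omega) p hlen hnd hcol
      have hσeq : sigmaSeq k (n + 2)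
          = (List.replicate (k * (n + 2) - 1) (sigmaSeq k (n + 1) ++ [n + 2])).flatten
            ++ sigmaSeq k (n + 1) := rfl
      refine ⟨by rw [hσeq]; exact A, ?_, ?_, by rw [hσeq]; exact E⟩
      · -- completeness
        intro q hperm hcolq
        have hqlen : q.length = n + 2 := by
          have := hperm.length_eq; simp at this; omega
        have hqne : q ≠ [] := by intro h; rw [h] at hqlen; simp at hqlen
        obtain ⟨w, y, hq⟩ := (List.eq_nil_or_concat q).resolve_left hqne
        rw [List.concat_eq_append] at hq
        subst hq
        have hv : y.1 ∈ p.map Prod.fst := hperm.mem_iff.1 (by simp)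
        have hy2 : y.2 < k := hcolq y (by simp)
        obtain ⟨b, hb, hsym⟩ := sym_surj k hk p hpne hcol y.1 y.2 hv hy2
        rw [hσeq]
        refine C (w ++ [y]) b hperm hcolq (by rw [hlen] at hb; omega) ?_
        rw [List.getLastD_concat, hsym, Prod.mk.eta]
      · -- the final permutation
        rw [hσeq, R]
        set N := n + 2 with hN
        set M := (k - 1) * N with hM
        have hx1 : M + N = k * N := by
          rw [hM]
          calc (k - 1) * N + N = (k - 1 + 1) * N := (Nat.succ_mul _ _).symm
          _ = k * N := by rw [(by omega : k - 1 + 1 = k)]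
        have hceq : k * N - 1 = (n + 1) + M := by omega
        have hdiv : (k * N - 1) / N = k - 1 := by
          rw [hceq, hM, Nat.add_mul_div_right _ _ (by omega : 0 < N),
            Nat.div_eq_of_lt (by omega), Nat.zero_add]
        have hmod : (k * N - 1) % N = n + 1 := by
          rw [hceq, hM, Nat.add_mul_mod_self_right, Nat.mod_eq_of_lt (by omega)]
        have hrot : (crot k)^[k * N - 1] p
            = p.drop 1 ++ colShift k (k - 1) (p.take 1) := by
          rw [crot_iter k hk p hpne hcol (k * N - 1), hlen, hdiv, hmod,
            (by omega : N - (n + 1) = 1), (by omega : k - 1 + 1 = k)]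
          have : colShift k k (p.drop 1) = p.drop 1 := by
            have h0 := colShift_add_k k 0 (p.drop 1)
            rw [Nat.zero_add] at h0
            rw [h0, colShift_zero k _ (colOk_sublist (List.drop_sublist _ _) hcol)]
          rw [this]
        rw [hrot]
        obtain ⟨h, t, rfl⟩ := List.exists_cons_of_ne_nil hpne
        have htlen : t.length = n + 1 := by
          have h2 := hlen; simp at h2; omega
        simp only [List.drop_succ_cons, List.drop_zero, List.take_succ_cons, List.take_zero]
        have hbt : ∀ j ∈ sigmaSeq k (n + 1), j ≤ t.length := by
          intro j hj; rw [htlen]; exact (sigma_bounds k (n + 1) j hj).2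
        rw [crun_suffix k _ t _ hbt]
        have htnd : (t.map Prod.fst).Nodup := by
          simp only [List.map_cons] at hnd
          exact hnd.of_cons
        have htcol : ColOk k t := colOk_sublist (by simp) hcol
        rw [(IH t htlen htnd htcol).2.2.1]
        rw [List.reverse_cons, colShift_append]
  
end GreedyFlip

namespace GreedyFlip

lemma chain_take_one (k : ℕ) (σ : List ℕ) (p : CP) : (chain k σ p).take 1 = [p] := by
  cases σ <;> simp

lemma take_getLastD {α : Type} {l : List α} {t : ℕ} (h : t < l.length) (d : α) :
    (l.take (t + 1)).getLastD d = l.getD t d := by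
  rw [List.take_succ, List.getElem?_eq_getElem h, List.getD_eq_getElem?_getD,
    List.getElem?_eq_getElem h, Option.getD_some, Option.toList_some, List.getLastD_concat]

lemma take_succ_getD {α : Type} {l : List α} {m : ℕ} (h : m < l.length) (d : α) :
    l.take m ++ [l.getD m d] = l.take (m + 1) := by
  rw [List.take_succ, List.getElem?_eq_getElem h, List.getD_eq_getElem?_getD,
    List.getElem?_eq_getElem h]
  simp

lemma nodup_getD_not_mem_take {α : Type} {l : List α} (hnd : l.Nodup) {m : ℕ}
    (h : m < l.length) (d : α) : l.getD m d ∉ l.take m := by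
  intro hmem
  have hsub : (l.take (m + 1)).Nodup := ((List.take_sublist _ _).nodup) hnd
  rw [← take_succ_getD h d] at hsub
  exact (List.nodup_append.1 hsub).2.2 _ hmem _ (List.mem_singleton_self _) rfl

lemma find?_first (pr : ℕ → Bool) : ∀ (m a j : ℕ), a ≤ j → j < a + m →
    (∀ i, a ≤ i → i < j → pr i = false) → pr j = true →
    (List.range' a m).find? pr = some j := by
  intro m
  induction m with
  | zero => intro a j h1 h2 _ _; omega
  | succ m ih =>
    intro a j h1 h2 hf ht
    rw [List.range'_succ]
    rcases Nat.eq_or_lt_of_le h1 with rfl | hlt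
    · simp [List.find?, ht]
    · have ha : pr a = false := hf a (Nat.le_refl a) hlt
      simp only [List.find?, ha]
      exact ih (a + 1) j hlt (by omega) (fun i hi1 hi2 => hf i (by omega) hi2) ht

lemma range_map_succ_eq (n : ℕ) : (List.range n).map (· + 1) = List.range' 1 n := by
  rw [List.range'_eq_map_range]
  exact List.map_congr_left fun x _ => Nat.add_comm x 1

lemma idPerm_length (n : ℕ) : (idPerm n).length = n := by simp [idPerm]

lemma idPerm_nodup (n : ℕ) : ((idPerm n).map Prod.fst).Nodup := by
  simp only [idPerm, List.map_map]
  exact List.Nodup.map (fun a b h => by simpa using h) List.nodup_range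

lemma idPerm_colOk (n k : ℕ) (hk : 1 ≤ k) : ColOk k (idPerm n) := by
  intro x hx
  simp only [idPerm, List.mem_map] at hx
  obtain ⟨i, -, rfl⟩ := hx
  simp; omega

lemma greedy_eq (n k : ℕ) (hn : 1 ≤ n) (hk : 1 ≤ k) :
    ∀ t, t ≤ (sigmaSeq k n).length →
      greedyList n k t = (chain k (sigmaSeq k n) (idPerm n)).take (t + 1) := by
  obtain ⟨Nd, Comp, Run, Min⟩ := mainThm k hk n hn (idPerm n) (idPerm_length n)
    (idPerm_nodup n) (idPerm_colOk n k hk)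
  have hClen : (chain k (sigmaSeq k n) (idPerm n)).length = (sigmaSeq k n).length + 1 :=
    chain_length _ _ _
  intro t
  induction t with
  | zero => intro _; rw [chain_take_one]; rfl
  | succ t iht =>
    intro ht1
    have htlen : t < (sigmaSeq k n).length := by omega
    have hL := iht (by omega)
    have hlast : ((chain k (sigmaSeq k n) (idPerm n)).take (t + 1)).getLastD []
        = (chain k (sigmaSeq k n) (idPerm n)).getD t [] := take_getLastD (by omega) []
    set jt := (sigmaSeq k n).getD t 0 with hjt
    have hjtb : 1 ≤ jt ∧ jt ≤ n := sigma_bounds k n jt (mem_of_getD htlen 0)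
    have hnext : cflip k jt ((chain k (sigmaSeq k n) (idPerm n)).getD t [])
        = (chain k (sigmaSeq k n) (idPerm n)).getD (t + 1) [] :=
      (chain_getD_succ k (sigmaSeq k n) (idPerm n) t htlen).symm
    have hnotmem : (chain k (sigmaSeq k n) (idPerm n)).getD (t + 1) []
        ∉ (chain k (sigmaSeq k n) (idPerm n)).take (t + 1) :=
      nodup_getD_not_mem_take Nd (by omega) []
    have hfind : (((List.range n).map (· + 1)).find? (fun j =>
        decide (cflip k j (((chain k (sigmaSeq k n) (idPerm n)).take (t + 1)).getLastD [])
          ∉ (chain k (sigmaSeq k n) (idPerm n)).take (t + 1)))) = some jt := by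
      simp only [hlast]
      rw [range_map_succ_eq]
      refine find?_first _ n 1 jt hjtb.1 (by omega) ?_ ?_
      · intro i hi1 hi2
        have hmem := Min t htlen i hi1 hi2
        simp only [List.getD_eq_getElem?_getD] at hmem
        simp [hmem]
      · rw [hnext]
        have hnm := hnotmem
        simp only [List.getD_eq_getElem?_getD] at hnm
        simp [hnm]
    simp only [greedyList]
    simp only [hL]
    rw [hfind]
    show (chain k (sigmaSeq k n) (idPerm n)).take (t + 1)
        ++ [cflip k jt (((chain k (sigmaSeq k n) (idPerm n)).take (t + 1)).getLastD [])]
      = (chain k (sigmaSeq k n) (idPerm n)).take (t + 1 + 1)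
    rw [hlast, hnext]
    exact take_succ_getD (by omega) []

end GreedyFlip

/-- For all `n,k ≥ 1`, the greedy min-flip sequence does not get stuck
before producing all `kⁿ·n!` coloured permutations, and its flip lengths are exactly the
entries of `σ^k_n`: for `1 ≤ i ≤ kⁿ·n! - 1`, the step from `G_{i-1}` to `G_i` is a flip
whose length is the `i`-th entry of `σ^k_n`. -/
theorem greedy_min_flipSeq (n k : ℕ) (hn : 1 ≤ n) (hk : 1 ≤ k) :
    (greedyList n k (k ^ n * n.factorial - 1)).length = k ^ n * n.factorial ∧
    ∀ i, 1 ≤ i → i ≤ k ^ n * n.factorial - 1 →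
      (greedyList n k i).getLastD [] =
        cflip k ((sigmaSeq k n).getD (i - 1) 0) ((greedyList n k (i - 1)).getLastD []) := by
  have hT := GreedyFlip.sigma_length k hk n hn
  have hClen : (GreedyFlip.chain k (sigmaSeq k n) (idPerm n)).length
      = (sigmaSeq k n).length + 1 := GreedyFlip.chain_length _ _ _
  constructor
  · rw [(by omega : k ^ n * n.factorial - 1 = (sigmaSeq k n).length)]
    rw [GreedyFlip.greedy_eq n k hn hk (sigmaSeq k n).length (Nat.le_refl _)]
    rw [List.length_take]
    omega
  · intro i h1 h2
    have h2' : i ≤ (sigmaSeq k n).length := by omega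
    rw [GreedyFlip.greedy_eq n k hn hk i h2',
      GreedyFlip.greedy_eq n k hn hk (i - 1) (by omega)]
    rw [GreedyFlip.take_getLastD (by omega) [], GreedyFlip.take_getLastD (by omega) []]
    have hstep := GreedyFlip.chain_getD_succ k (sigmaSeq k n) (idPerm n) (i - 1) (by omega)
    rw [(by omega : i - 1 + 1 = i)] at hstep
    exact hstep
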